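/- Conversely, if f is holomorphic with nonvanishing derivative on a connected open set in ℂ and S(f) = 0 identically, then f is the restriction of a Möbius transformation. -/

import Mathlib

/-- The Schwarzian derivative `S(f) = (f''/f')' - (1/2)(f''/f')²`. -/
noncomputable def schwarzian (f : ℂ → ℂ) (z : ℂ) : ℂ :=
  deriv (fun w => deriv (deriv f) w / deriv f w) z
    - (1 / 2) * (deriv (deriv f) z / deriv f z) ^ 2

open Metric in
/-- A function with vanishing derivative on an open preconnected set is constant there. -/
lemma const_of_hasDerivAt_zero {U : Set ℂ} (hUo : IsOpen U) (hUc : IsPreconnected U)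
    {F : ℂ → ℂ} (hF : ∀ z ∈ U, HasDerivAt F 0 z) {z0 z1 : ℂ}
    (h0 : z0 ∈ U) (h1 : z1 ∈ U) : F z1 = F z0 := by
  have ball_const : ∀ c r, ball c r ⊆ U → ∀ x ∈ ball c r, ∀ y ∈ ball c r, F x = F y := by
    intro c r hsub x hx y hy
    refine (convex_ball c r).is_const_of_fderivWithin_eq_zero
      (fun p hp => ((hF p (hsub hp)).differentiableAt).differentiableWithinAt) ?_ hx hy
    intro p hp
    rw [fderivWithin_of_isOpen isOpen_ball hp, (hF p (hsub hp)).hasFDerivAt.fderiv]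
    ext; simp
  set V : Set ℂ := {z ∈ U | F z = F z0} with hV
  have hVo : IsOpen V := by
    rw [Metric.isOpen_iff]
    rintro z ⟨hzU, hzF⟩
    obtain ⟨r, hr, hsub⟩ := Metric.isOpen_iff.1 hUo z hzU
    refine ⟨r, hr, fun y hy => ⟨hsub hy, ?_⟩⟩
    rw [ball_const z r hsub y hy z (mem_ball_self hr), hzF]
  have hsubset : U ⊆ V := by
    refine hUc.subset_of_closure_inter_subset hVo ⟨z0, h0, ⟨h0, rfl⟩⟩ ?_
    rintro z ⟨hzcl, hzU⟩
    obtain ⟨r, hr, hsub⟩ := Metric.isOpen_iff.1 hUo z hzU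
    obtain ⟨y, hyV, hyz⟩ := Metric.mem_closure_iff.1 hzcl r hr
    have hyb : y ∈ ball z r := by rwa [mem_ball, dist_comm]
    refine ⟨hzU, ?_⟩
    rw [ball_const z r hsub z (mem_ball_self hr) y hyb, hyV.2]
  exact (hsubset h1).2

/-- If `f` is holomorphic with nonvanishing derivative on a connected open set `U ⊆ ℂ`
and its Schwarzian derivative vanishes identically on `U`, then `f` is the restriction
of a Möbius transformation. -/
theorem eq_mobius_of_schwarzian_eq_zero
    (U : Set ℂ) (hU : IsOpen U) (hUconn : IsPreconnected U)
    (f : ℂ → ℂ) (hf : DifferentiableOn ℂ f U)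
    (hf' : ∀ z ∈ U, deriv f z ≠ 0)
    (hS : ∀ z ∈ U, schwarzian f z = 0) :
    ∃ a b c d : ℂ, a * d - b * c ≠ 0 ∧ ∀ z ∈ U, f z = (a * z + b) / (c * z + d) := by
  rcases U.eq_empty_or_nonempty with rfl | ⟨z0, hz0⟩
  · exact ⟨1, 0, 0, 1, by norm_num, fun z hz => absurd hz (by simp)⟩
  -- analyticity of `f` and its derivatives
  have hfa : AnalyticOnNhd ℂ f U := hf.analyticOnNhd hU
  have h1a : AnalyticOnNhd ℂ (deriv f) U := hfa.deriv
  have h2a : AnalyticOnNhd ℂ (deriv (deriv f)) U := h1a.deriv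
  set g : ℂ → ℂ := fun w => deriv (deriv f) w / deriv f w with hgdef
  set w : ℂ → ℂ := fun z => (deriv f z)⁻¹ with hwdef
  set w1 : ℂ → ℂ := fun z => -(g z) * w z with hw1def
  set w2 : ℂ → ℂ := fun z => 1/2 * (g z)^2 * w z with hw2def
  -- `f` is differentiable at points of `U`
  have hfd : ∀ z ∈ U, HasDerivAt f (deriv f z) z := fun z hz =>
    (hf.differentiableAt (hU.mem_nhds hz)).hasDerivAt
  -- derivative of `g`
  have hg' : ∀ z ∈ U, HasDerivAt g (1/2 * (g z)^2) z := by
    intro z hz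
    have hd : DifferentiableAt ℂ g z :=
      ((h2a z hz).differentiableAt).div ((h1a z hz).differentiableAt) (hf' z hz)
    have := hS z hz
    unfold schwarzian at this
    have hderiv : deriv g z = 1/2 * (g z)^2 := by
      rw [hgdef]
      have : deriv (fun w => deriv (deriv f) w / deriv f w) z
          = 1/2 * (deriv (deriv f) z / deriv f z)^2 := by linear_combination this
      simpa using this
    simpa [hderiv] using hd.hasDerivAt
  -- derivative of `w`
  have hw' : ∀ z ∈ U, HasDerivAt w (w1 z) z := by
    intro z hz
    have h1 : HasDerivAt (deriv f) (deriv (deriv f) z) z := ((h1a z hz).differentiableAt).hasDerivAt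
    have := h1.inv (hf' z hz)
    exact this.congr_deriv (by
      rw [hw1def, hgdef, hwdef]
      field_simp)
  -- derivative of `w1`
  have hw1' : ∀ z ∈ U, HasDerivAt w1 (w2 z) z := by
    intro z hz
    have := ((hg' z hz).neg).mul (hw' z hz)
    exact this.congr_deriv (by
      simp only [hw2def, hw1def, Pi.neg_apply]
      ring)
  -- derivative of `w2`
  have hw2' : ∀ z ∈ U, HasDerivAt w2 0 z := by
    intro z hz
    have hgp : HasDerivAt (fun y => 1/2 * (g y)^2) (1/2 * (2 * g z ^ 1 * (1/2 * (g z)^2))) z :=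
      ((hg' z hz).pow 2).const_mul (1/2)
    have := hgp.mul (hw' z hz)
    exact this.congr_deriv (by
      rw [hw1def]
      ring)
  -- `w2` is constant; introduce the coefficients of the quadratic polynomial `w`
  set c2 : ℂ := w2 z0 with hc2
  have hw2const : ∀ z ∈ U, w2 z = c2 := fun z hz =>
    const_of_hasDerivAt_zero hU hUconn hw2' hz0 hz
  set c1 : ℂ := w1 z0 - c2 * z0 with hc1
  have hw1lin : ∀ z ∈ U, w1 z = c2 * z + c1 := by
    intro z hz
    have hF : ∀ y ∈ U, HasDerivAt (fun y => w1 y - c2 * y) 0 y := by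
      intro y hy
      have := (hw1' y hy).sub ((hasDerivAt_id y).const_mul c2)
      exact this.congr_deriv (by simp [hw2const y hy])
    have := const_of_hasDerivAt_zero hU hUconn hF hz0 hz
    linear_combination this
  set c0 : ℂ := w z0 - c2/2 * z0^2 - c1 * z0 with hc0
  have hwquad : ∀ z ∈ U, w z = c2/2 * z^2 + c1 * z + c0 := by
    intro z hz
    have hF : ∀ y ∈ U, HasDerivAt (fun y => w y - (c2/2 * y^2 + c1 * y)) 0 y := by
      intro y hy
      have hp : HasDerivAt (fun y : ℂ => c2/2 * y^2 + c1 * y) (c2/2 * (2*y^1*1) + c1 * 1) y := by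
        exact (((hasDerivAt_id y).pow 2).const_mul (c2/2)).add ((hasDerivAt_id y).const_mul c1)
      have := (hw' y hy).sub hp
      rw [hw1lin y hy] at this
      exact this.congr_deriv (by ring)
    have := const_of_hasDerivAt_zero hU hUconn hF hz0 hz
    linear_combination this
  have hwne : ∀ z ∈ U, w z ≠ 0 := fun z hz => inv_ne_zero (hf' z hz)
  -- the pointwise identity `(w1)² = 2 w2 w` gives zero discriminant
  have hkey : (w1 z0)^2 = 2 * w2 z0 * w z0 := by
    rw [hw1def, hw2def]; ring
  set γ : ℂ := c2/2 with hγ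
  have hdisc : c1^2 = 4 * γ * c0 := by
    have e1 : w1 z0 = c2 * z0 + c1 := by rw [hc1]; ring
    have e2 : w2 z0 = c2 := rfl
    have e3 : w z0 = c2/2 * z0^2 + c1 * z0 + c0 := by rw [hc0]; ring
    rw [e1, e2, e3] at hkey
    rw [hγ]
    linear_combination hkey
  by_cases hγ0 : γ = 0
  · -- `f` is affine
    have hc2z : c2 = 0 := by
      have h := hγ; rw [hγ0] at h; linear_combination -2 * h
    have hc1z : c1 = 0 := by
      have : c1^2 = 0 := by rw [hdisc, hγ0]; ring
      exact pow_eq_zero_iff (by norm_num) |>.mp this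
    have hwc : ∀ z ∈ U, w z = c0 := by
      intro z hz
      rw [hwquad z hz, hγ0, hc1z]; ring
    have hc0ne : c0 ≠ 0 := by
      have := hwne z0 hz0
      rwa [hwc z0 hz0] at this
    set a : ℂ := c0⁻¹ with ha
    have hfderiv : ∀ z ∈ U, deriv f z = a := by
      intro z hz
      have : (deriv f z)⁻¹ = c0 := hwc z hz
      rw [ha, ← this, inv_inv]
    set b : ℂ := f z0 - a * z0 with hb
    refine ⟨a, b, 0, 1, by simpa [ha] using inv_ne_zero hc0ne, fun z hz => ?_⟩
    have hF : ∀ y ∈ U, HasDerivAt (fun y => f y - a * y) 0 y := by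
      intro y hy
      have := (hfd y hy).sub ((hasDerivAt_id y).const_mul a)
      exact this.congr_deriv (by simp [hfderiv y hy])
    have := const_of_hasDerivAt_zero hU hUconn hF hz0 hz
    have : f z = a * z + b := by rw [hb]; linear_combination this
    rw [this]
    simp
  · -- genuine Möbius case
    set k : ℂ := c1/(2*γ) with hk
    have hc1k : c1 = 2*γ*k := by rw [hk]; field_simp
    have hc0k : c0 = γ * k^2 := by
      rw [hk]
      field_simp
      linear_combination γ * hdisc
    have hwsq : ∀ z ∈ U, w z = γ * (z + k)^2 := by
      intro z hz
      rw [hwquad z hz, hc1k, hc0k, hγ]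
      ring
    have hzk : ∀ z ∈ U, z + k ≠ 0 := by
      intro z hz h
      apply hwne z hz
      rw [hwsq z hz, h]; ring
    set B : ℂ := f z0 + γ⁻¹ * (z0 + k)⁻¹ with hB
    have hfeq : ∀ z ∈ U, f z = B - γ⁻¹ * (z + k)⁻¹ := by
      intro z hz
      have hF : ∀ y ∈ U, HasDerivAt (fun y => f y + γ⁻¹ * (y + k)⁻¹) 0 y := by
        intro y hy
        have hinv : HasDerivAt (fun y : ℂ => (y + k)⁻¹) (-1 / (y + k)^2) y := by
          have := ((hasDerivAt_id y).add_const k).inv (hzk y hy)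
          simp at this
          exact this
        have := (hfd y hy).add (hinv.const_mul γ⁻¹)
        have hd : deriv f y = (w y)⁻¹ := by rw [hwdef, inv_inv]
        rw [hd, hwsq y hy] at this
        exact this.congr_deriv (by
          have := hzk y hy
          field_simp
          ring)
      have := const_of_hasDerivAt_zero hU hUconn hF hz0 hz
      rw [hB]
      linear_combination this
    refine ⟨B, B * k - γ⁻¹, 1, k, ?_, fun z hz => ?_⟩
    · have : B * k - (B * k - γ⁻¹) * 1 = γ⁻¹ := by ring
      rw [this]
      exact inv_ne_zero hγ0
    · rw [hfeq z hz]
      have hne := hzk z hz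
      field_simp
      ring
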